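/- Let p ≥ 1 and 0 ≤ q ≤ p be integers, and let x, y, z ∈ ℂ be nonzero with x ≠ 1, x ≠ z, x·z ≠ 1, x^a·y ≠ z^a for all 0 ≤ a ≤ p, and x^{p−q−a}·y ≠ z^a (integer exponent) for all 0 ≤ a ≤ p. Then the Hilbert series of Y^{p,q}, defined as the sum over a = 0,…,p−1 of [ (1−x)(1 − x^a y z^{−a})(1 − x^{−1−a} z^{1+a} y^{−1}) ]^{−1} + [ (1−x^{−1})(1 − x^{p−q−a} y z^{−a})(1 − x^{1+a−p+q} z^{1+a} y^{−1}) ]^{−1}, equals (x·y/(1−x)) · [ (1 − x^p z^p)/((1 − x z)(1 − x^{p−q} y)(x^q z^p − y)) + (z^p − x^p)/((z − x)(1 − y)(x^p y − z^p)) ]. -/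

import Mathlib

open scoped BigOperators

set_option maxHeartbeats 1000000 in
private lemma Ypq_keyA (x z U : ℂ) (hx : x ≠ 0) (hz : z ≠ 0) (hx1 : (1:ℂ) - x ≠ 0)
    (hxz : x - z ≠ 0) (hU0 : U ≠ 0)
    (hU : (1:ℂ) - U ≠ 0) (hU' : (1:ℂ) - x * U / z ≠ 0) :
    ((1 - x) * (1 - U) * (1 - (x * U / z)⁻¹))⁻¹
    = x / ((1 - x) * (x - z)) * ((1 - U)⁻¹ - (1 - x * U / z)⁻¹) := by
  have hxUz : x * U - z ≠ 0 := by
    intro h; apply hU'; field_simp; linear_combination -h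
  have e1 : (1:ℂ) - (x * U / z)⁻¹ = (x * U - z) / (x * U) := by
    field_simp
  have e2 : (1:ℂ) - x * U / z = (z - x * U) / z := by field_simp
  have hzxU : z - x * U ≠ 0 := by intro h; apply hxUz; linear_combination -h
  rw [e1, e2]
  rw [show (1 - x) * (1 - U) * ((x * U - z) / (x * U))
      = ((1 - x) * (1 - U) * (x * U - z)) / (x * U) by ring, inv_div]
  rw [div_eq_iff (mul_ne_zero (mul_ne_zero hx1 hU) hxUz)]
  field_simp
  ring

set_option maxHeartbeats 1000000 in
private lemma Ypq_keyC (x z V : ℂ) (hx : x ≠ 0) (hz : z ≠ 0) (hx1 : (1:ℂ) - x ≠ 0)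
    (hxz1 : (1:ℂ) - x * z ≠ 0) (hV0 : V ≠ 0)
    (hV : (1:ℂ) - V ≠ 0) (hV' : (1:ℂ) - V / (x * z) ≠ 0) :
    ((1 - x⁻¹) * (1 - V) * (1 - (V / (x * z))⁻¹))⁻¹
    = x / ((x - 1) * (1 - x * z)) * ((1 - V)⁻¹ - (1 - V / (x * z))⁻¹) := by
  have hx1' : x - 1 ≠ 0 := fun h => hx1 (by linear_combination -h)
  have hVxz : V - x * z ≠ 0 := by
    intro h; apply hV'
    have hV2 : V = x * z := by linear_combination h
    rw [hV2]; field_simp; ring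
  have e0 : (1:ℂ) - x⁻¹ = (x - 1) / x := by field_simp
  have e1 : (1:ℂ) - (V / (x * z))⁻¹ = (V - x * z) / V := by field_simp
  have e2 : (1:ℂ) - V / (x * z) = (x * z - V) / (x * z) := by field_simp
  have hxzV : x * z - V ≠ 0 := by intro h; apply hVxz; linear_combination -h
  rw [e0, e1, e2]
  rw [show (x - 1) / x * (1 - V) * ((V - x * z) / V)
      = ((x - 1) * (1 - V) * (V - x * z)) / (x * V) by field_simp, inv_div]
  rw [div_eq_iff (mul_ne_zero (mul_ne_zero hx1' hV) hVxz)]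
  field_simp
  ring

set_option maxHeartbeats 1000000 in
private lemma Ypq_finalA (x z y P Zp : ℂ) (hZ : Zp ≠ 0)
    (h1 : (1:ℂ) - y ≠ 0) (h4 : P * y - Zp ≠ 0)
    (hx1 : (1:ℂ) - x ≠ 0) (hxz : x - z ≠ 0) :
    x / ((1 - x) * (x - z)) * ((1 - y)⁻¹ - (1 - P * y * Zp⁻¹)⁻¹)
    = (x * y / (1 - x)) * ((Zp - P) / ((z - x) * (1 - y) * (P * y - Zp))) := by
  have e1 : (1:ℂ) - P * y * Zp⁻¹ = (Zp - P * y) / Zp := by field_simp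
  have h4' : Zp - P * y ≠ 0 := fun h => h4 (by linear_combination -h)
  have hzx : z - x ≠ 0 := fun h => hxz (by linear_combination -h)
  rw [e1, inv_div]
  rw [show P * y - Zp = -(Zp - P * y) by ring]
  generalize hw : Zp - P * y = w at *
  field_simp
  linear_combination (x ^ 2 - x * z) * hw

set_option maxHeartbeats 1000000 in
private lemma Ypq_finalC (x z y Q R Zp : ℂ) (hQ : Q ≠ 0) (hZ : Zp ≠ 0)
    (h2 : (1:ℂ) - R * y ≠ 0) (h3 : Q * Zp - y ≠ 0)
    (hx1 : (1:ℂ) - x ≠ 0) (hxz1 : (1:ℂ) - x * z ≠ 0) :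
    x / ((x - 1) * (1 - x * z)) * ((1 - R * y)⁻¹ - (1 - Q⁻¹ * y * Zp⁻¹)⁻¹)
    = (x * y / (1 - x)) *
        ((1 - R * Q * Zp) / ((1 - x * z) * (1 - R * y) * (Q * Zp - y))) := by
  have e2 : (1:ℂ) - Q⁻¹ * y * Zp⁻¹ = (Q * Zp - y) / (Q * Zp) := by field_simp
  have hx1' : x - 1 ≠ 0 := fun h => hx1 (by linear_combination -h)
  rw [e2, inv_div]
  field_simp
  ring

private lemma Ypq_nefac (w y c : ℂ) (hc : c ≠ 0) (h : w * y ≠ c) :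
    (1:ℂ) - w * y * c⁻¹ ≠ 0 := by
  intro h0
  apply h
  have h1 : w * y * c⁻¹ = 1 := by linear_combination -h0
  field_simp at h1
  exact h1

noncomputable def YpqF (p q : ℕ) (x y z : ℂ) (a : ℕ) : ℂ :=
  x / ((1 - x) * (x - z)) * (1 - x ^ a * y * (z ^ a)⁻¹)⁻¹ +
    x / ((x - 1) * (1 - x * z)) *
      (1 - x ^ ((p : ℤ) - (q : ℤ) - (a : ℤ)) * y * (z ^ a)⁻¹)⁻¹

/-- The Hilbert series of `Y^{p,q}`: the sum over the `2p` triangles of the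
toric diagram of their simple rational contributions equals
`(x y/(1-x)) · [(1 - x^p z^p)/((1-xz)(1 - x^{p-q} y)(x^q z^p - y))
  + (z^p - x^p)/((z-x)(1-y)(x^p y - z^p))]`. -/
theorem Ypq_hilbert_series (p q : ℕ) (hp : 1 ≤ p) (hq : q ≤ p) (x y z : ℂ)
    (hx : x ≠ 0) (hy : y ≠ 0) (hz : z ≠ 0)
    (hx1 : x ≠ 1) (hxz : x ≠ z) (hxz1 : x * z ≠ 1)
    (hA : ∀ a : ℕ, a ≤ p → x ^ a * y ≠ z ^ a)
    (hC : ∀ a : ℕ, a ≤ p → x ^ ((p : ℤ) - (q : ℤ) - (a : ℤ)) * y ≠ z ^ a) :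
    ∑ a ∈ Finset.range p,
      (((1 - x) * (1 - x ^ a * y * (z ^ a)⁻¹) *
          (1 - x ^ (-(1 : ℤ) - (a : ℤ)) * z ^ (a + 1) * y⁻¹))⁻¹ +
        ((1 - x⁻¹) * (1 - x ^ ((p : ℤ) - (q : ℤ) - (a : ℤ)) * y * (z ^ a)⁻¹) *
          (1 - x ^ (1 + (a : ℤ) - (p : ℤ) + (q : ℤ)) * z ^ (a + 1) * y⁻¹))⁻¹)
    = (x * y / (1 - x)) *
        ((1 - x ^ p * z ^ p) /
            ((1 - x * z) * (1 - x ^ (p - q) * y) * (x ^ q * z ^ p - y)) +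
          (z ^ p - x ^ p) / ((z - x) * (1 - y) * (x ^ p * y - z ^ p))) := by
  have hx1' : (1:ℂ) - x ≠ 0 := sub_ne_zero.mpr fun h => hx1 h.symm
  have hxz' : x - z ≠ 0 := sub_ne_zero.mpr hxz
  have hxz1' : (1:ℂ) - x * z ≠ 0 := sub_ne_zero.mpr fun h => hxz1 h.symm
  have step : ∀ a ∈ Finset.range p,
      (((1 - x) * (1 - x ^ a * y * (z ^ a)⁻¹) *
          (1 - x ^ (-(1 : ℤ) - (a : ℤ)) * z ^ (a + 1) * y⁻¹))⁻¹ +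
        ((1 - x⁻¹) * (1 - x ^ ((p : ℤ) - (q : ℤ) - (a : ℤ)) * y * (z ^ a)⁻¹) *
          (1 - x ^ (1 + (a : ℤ) - (p : ℤ) + (q : ℤ)) * z ^ (a + 1) * y⁻¹))⁻¹)
      = YpqF p q x y z a - YpqF p q x y z (a + 1) := by
    intro a ha
    rw [Finset.mem_range] at ha
    set U : ℂ := x ^ a * y * (z ^ a)⁻¹ with hUdef
    set V : ℂ := x ^ ((p : ℤ) - (q : ℤ) - (a : ℤ)) * y * (z ^ a)⁻¹ with hVdef
    have hU0 : U ≠ 0 :=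
      mul_ne_zero (mul_ne_zero (pow_ne_zero a hx) hy) (inv_ne_zero (pow_ne_zero a hz))
    have hV0 : V ≠ 0 :=
      mul_ne_zero (mul_ne_zero (zpow_ne_zero _ hx) hy) (inv_ne_zero (pow_ne_zero a hz))
    have eU' : x * U / z = x ^ (a + 1) * y * (z ^ (a + 1))⁻¹ := by
      rw [hUdef, pow_succ, pow_succ]
      field_simp
    have eV' : V / (x * z)
        = x ^ ((p : ℤ) - (q : ℤ) - ((a + 1 : ℕ) : ℤ)) * y * (z ^ (a + 1))⁻¹ := by
      rw [hVdef, show (p : ℤ) - (q : ℤ) - ((a + 1 : ℕ) : ℤ)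
          = ((p : ℤ) - (q : ℤ) - (a : ℤ)) - 1 by push_cast; ring,
        zpow_sub_one₀ hx, pow_succ]
      field_simp
    have hU1 : (1:ℂ) - U ≠ 0 := Ypq_nefac _ _ _ (pow_ne_zero a hz) (hA a ha.le)
    have hU2 : (1:ℂ) - x * U / z ≠ 0 := by
      rw [eU']; exact Ypq_nefac _ _ _ (pow_ne_zero _ hz) (hA (a + 1) ha)
    have hV1 : (1:ℂ) - V ≠ 0 := Ypq_nefac _ _ _ (pow_ne_zero a hz) (hC a ha.le)
    have hV2 : (1:ℂ) - V / (x * z) ≠ 0 := by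
      rw [eV']; exact Ypq_nefac _ _ _ (pow_ne_zero _ hz) (hC (a + 1) ha)
    have e3 : x ^ (-(1 : ℤ) - (a : ℤ)) * z ^ (a + 1) * y⁻¹ = (x * U / z)⁻¹ := by
      rw [eU', show -(1 : ℤ) - (a : ℤ) = -(((a + 1 : ℕ) : ℤ)) by push_cast; ring,
        zpow_neg, zpow_natCast, mul_inv, mul_inv, inv_inv]
      ring
    have e4 : x ^ (1 + (a : ℤ) - (p : ℤ) + (q : ℤ)) * z ^ (a + 1) * y⁻¹
        = (V / (x * z))⁻¹ := by
      rw [eV', show 1 + (a : ℤ) - (p : ℤ) + (q : ℤ)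
          = -((p : ℤ) - (q : ℤ) - ((a + 1 : ℕ) : ℤ)) by push_cast; ring,
        zpow_neg, mul_inv, mul_inv, inv_inv]
      ring
    rw [e3, e4, Ypq_keyA x z U hx hz hx1' hxz' hU0 hU1 hU2,
      Ypq_keyC x z V hx hz hx1' hxz1' hV0 hV1 hV2]
    unfold YpqF
    rw [← hUdef, ← hVdef, ← eU', ← eV']
    ring
  rw [Finset.sum_congr rfl step, Finset.sum_range_sub' (YpqF p q x y z) p]
  -- final evaluation
  have h1 : (1:ℂ) - y ≠ 0 := by
    have := hA 0 (Nat.zero_le p)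
    simp only [pow_zero, one_mul] at this
    exact sub_ne_zero.mpr fun h => this h.symm
  have epq : x ^ ((p : ℤ) - (q : ℤ)) = x ^ (p - q) := by
    rw [show (p : ℤ) - (q : ℤ) = ((p - q : ℕ) : ℤ) by omega, zpow_natCast]
  have h2 : (1:ℂ) - x ^ (p - q) * y ≠ 0 := by
    have := hC 0 (Nat.zero_le p)
    simp only [Nat.cast_zero, sub_zero, pow_zero, epq] at this
    exact sub_ne_zero.mpr fun h => this h.symm
  have eqq : x ^ ((p : ℤ) - (q : ℤ) - (p : ℤ)) = (x ^ q)⁻¹ := by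
    rw [show (p : ℤ) - (q : ℤ) - (p : ℤ) = -(q : ℤ) by ring, zpow_neg, zpow_natCast]
  have h3 : x ^ q * z ^ p - y ≠ 0 := by
    have h := hC p le_rfl
    rw [eqq] at h
    intro h0
    apply h
    have hy' : y = x ^ q * z ^ p := by linear_combination -h0
    rw [hy', ← mul_assoc, inv_mul_cancel₀ (pow_ne_zero q hx), one_mul]
  have h4 : x ^ p * y - z ^ p ≠ 0 := sub_ne_zero.mpr (hA p le_rfl)
  have hzp : (z : ℂ) ^ p ≠ 0 := pow_ne_zero p hz
  have hxq : (x : ℂ) ^ q ≠ 0 := pow_ne_zero q hx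
  have hrel : x ^ (p - q) * x ^ q = x ^ p := by
    rw [← pow_add]
    congr 1
    omega
  unfold YpqF
  simp only [pow_zero, inv_one, mul_one, one_mul, Nat.cast_zero, sub_zero, epq, eqq]
  rw [show x / ((1 - x) * (x - z)) * (1 - y)⁻¹ +
        x / ((x - 1) * (1 - x * z)) * (1 - x ^ (p - q) * y)⁻¹ -
      (x / ((1 - x) * (x - z)) * (1 - x ^ p * y * (z ^ p)⁻¹)⁻¹ +
        x / ((x - 1) * (1 - x * z)) * (1 - (x ^ q)⁻¹ * y * (z ^ p)⁻¹)⁻¹)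
      = x / ((1 - x) * (x - z)) * ((1 - y)⁻¹ - (1 - x ^ p * y * (z ^ p)⁻¹)⁻¹) +
        x / ((x - 1) * (1 - x * z)) *
          ((1 - x ^ (p - q) * y)⁻¹ - (1 - (x ^ q)⁻¹ * y * (z ^ p)⁻¹)⁻¹) by ring]
  rw [Ypq_finalA x z y (x ^ p) (z ^ p) hzp h1 h4 hx1' hxz',
    Ypq_finalC x z y (x ^ q) (x ^ (p - q)) (z ^ p) hxq hzp h2 h3 hx1' hxz1',
    hrel]
  ring
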